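/- Let p and q be orthogonal projections on a finite-dimensional Hilbert space (equivalently, in M_n(ℂ)). Then the sequence (qpq)^n converges in norm to the projection p ∧ q onto the intersection of the ranges of p and q. -/

import Mathlib

open Filter

section aux

variable {H : Type*} [NormedAddCommGroup H] [InnerProductSpace ℂ H] [CompleteSpace H]

local notation "⟪" x ", " y "⟫" => @inner ℂ _ _ x y

lemma aux_inner_proj (p : H →L[ℂ] H) (hp_sa : IsSelfAdjoint p) (hp_idem : p * p = p)
    (v : H) : ⟪v, p v⟫ = ((‖p v‖ ^ 2 : ℝ) : ℂ) := by
  have h1 : p v = p (p v) := by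
    conv_lhs => rw [← hp_idem]
    rfl
  calc ⟪v, p v⟫ = ⟪v, p (p v)⟫ := by rw [← h1]
    _ = ⟪v, ContinuousLinearMap.adjoint p (p v)⟫ := by rw [hp_sa.adjoint_eq]
    _ = ⟪p v, p v⟫ := ContinuousLinearMap.adjoint_inner_right p v (p v)
    _ = ((‖p v‖ ^ 2 : ℝ) : ℂ) := by
        rw [inner_self_eq_norm_sq_to_K]; norm_cast

lemma aux_norm_proj_le (p : H →L[ℂ] H) (hp_sa : IsSelfAdjoint p) (hp_idem : p * p = p)
    (v : H) : ‖p v‖ ≤ ‖v‖ := by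
  have h := aux_inner_proj p hp_sa hp_idem v
  have h2 : ‖p v‖ ^ 2 = ‖⟪v, p v⟫‖ := by
    rw [h, Complex.norm_real, Real.norm_eq_abs, abs_of_nonneg (by positivity)]
  have h3 : ‖⟪v, p v⟫‖ ≤ ‖v‖ * ‖p v‖ := norm_inner_le_norm v (p v)
  nlinarith [norm_nonneg (p v), norm_nonneg v]

lemma aux_fixed_of_norm_eq (p : H →L[ℂ] H) (hp_sa : IsSelfAdjoint p) (hp_idem : p * p = p)
    (v : H) (hv : ‖p v‖ = ‖v‖) : p v = v := by
  have h := aux_inner_proj p hp_sa hp_idem v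
  have hre : RCLike.re ⟪v, p v⟫ = ‖p v‖ ^ 2 := by
    rw [h]; norm_num [← Complex.ofReal_pow]
  have h2 : ‖v - p v‖ ^ 2 = 0 := by
    rw [norm_sub_sq (𝕜 := ℂ), hre, hv]
    ring
  have h3 : v - p v = 0 := by
    have := pow_eq_zero_iff (n := 2) (by norm_num) |>.mp h2
    exact norm_eq_zero.mp this
  exact (sub_eq_zero.mp h3).symm

omit [CompleteSpace H] in
lemma aux_mem_range_iff (p : H →L[ℂ] H) (hp_idem : p * p = p) (v : H) :
    v ∈ LinearMap.range (p : H →ₗ[ℂ] H) ↔ p v = v := by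
  constructor
  · rintro ⟨w, rfl⟩
    show p (p w) = p w
    conv_lhs => rw [← ContinuousLinearMap.mul_apply, hp_idem]
  · intro hv
    exact ⟨v, hv⟩

end aux

/-- Let `p` and `q` be orthogonal projections on a finite-dimensional (complex) Hilbert
space.  Then `(qpq)^n` converges in (operator) norm to the orthogonal projection onto
`range p ∩ range q`. -/
theorem tendsto_pow_qpq {H : Type*} [NormedAddCommGroup H] [InnerProductSpace ℂ H]
    [FiniteDimensional ℂ H]
    (p q : H →L[ℂ] H)
    (hp_sa : IsSelfAdjoint p) (hp_idem : p * p = p)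
    (hq_sa : IsSelfAdjoint q) (hq_idem : q * q = q) :
    Tendsto (fun n : ℕ => (q * p * q) ^ n) atTop
      (nhds ((LinearMap.range (p : H →ₗ[ℂ] H) ⊓ LinearMap.range (q : H →ₗ[ℂ] H)).subtypeL ∘L
        Submodule.orthogonalProjectionOnto (LinearMap.range (p : H →ₗ[ℂ] H) ⊓ LinearMap.range (q : H →ₗ[ℂ] H)))) := by
  classical
  set K : Submodule ℂ H :=
    LinearMap.range (p : H →ₗ[ℂ] H) ⊓ LinearMap.range (q : H →ₗ[ℂ] H) with hKdef
  set T : H →L[ℂ] H := q * p * q with hTdef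
  have hT_sa : IsSelfAdjoint T := by
    show star (q * p * q) = q * p * q
    rw [star_mul, star_mul, hp_sa.star_eq, hq_sa.star_eq, mul_assoc]
  have hT_symm : (T : H →ₗ[ℂ] H).IsSymmetric := hT_sa.isSymmetric
  set N : ℕ := Module.finrank ℂ H with hNdef
  set b : OrthonormalBasis (Fin N) ℂ H := hT_symm.eigenvectorBasis rfl with hbdef
  set μ : Fin N → ℝ := hT_symm.eigenvalues rfl with hμdef
  have hb : ∀ i, T (b i) = (μ i : ℂ) • b i := fun i =>
    hT_symm.apply_eigenvectorBasis rfl i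
  -- the basic inner-product identity for T
  have hinner : ∀ v : H, (inner ℂ v (T v) : ℂ) = ((‖p (q v)‖ ^ 2 : ℝ) : ℂ) := by
    intro v
    calc (inner ℂ v (T v) : ℂ) = inner ℂ v (q (p (q v))) := rfl
      _ = inner ℂ (q v) (p (q v)) := (hq_sa.isSymmetric v (p (q v))).symm
      _ = ((‖p (q v)‖ ^ 2 : ℝ) : ℂ) := aux_inner_proj p hp_sa hp_idem (q v)
  -- eigenvalues are in [0, 1]
  have hμval : ∀ i, μ i = ‖p (q (b i))‖ ^ 2 := by
    intro i
    have hb1 : ‖b i‖ = 1 := b.orthonormal.1 i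
    have h1 : (inner ℂ (b i) (T (b i)) : ℂ) = (μ i : ℂ) := by
      rw [hb i, inner_smul_right, inner_self_eq_norm_sq_to_K, hb1]
      norm_num
    have h2 := (h1.symm.trans (hinner (b i)))
    exact_mod_cast h2
  have hμ0 : ∀ i, 0 ≤ μ i := by intro i; rw [hμval i]; positivity
  have hμ1 : ∀ i, μ i ≤ 1 := by
    intro i
    rw [hμval i]
    have h1 : ‖p (q (b i))‖ ≤ ‖q (b i)‖ := aux_norm_proj_le p hp_sa hp_idem (q (b i))
    have h2 : ‖q (b i)‖ ≤ ‖b i‖ := aux_norm_proj_le q hq_sa hq_idem (b i)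
    have hb1 : ‖b i‖ = 1 := b.orthonormal.1 i
    nlinarith [norm_nonneg (p (q (b i)))]
  -- fixed points of T are exactly the common fixed points of p and q
  have hfix : ∀ v : H, T v = v → p v = v ∧ q v = v := by
    intro v hv
    have h2 := hinner v
    rw [hv] at h2
    have h2' : (inner ℂ v v : ℂ) = ((‖v‖ ^ 2 : ℝ) : ℂ) := by
      rw [inner_self_eq_norm_sq_to_K]; norm_cast
    have h3 : ‖v‖ ^ 2 = ‖p (q v)‖ ^ 2 := Complex.ofReal_inj.mp (h2'.symm.trans h2)
    have h4 : ‖p (q v)‖ ≤ ‖q v‖ := aux_norm_proj_le p hp_sa hp_idem (q v)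
    have h5 : ‖q v‖ ≤ ‖v‖ := aux_norm_proj_le q hq_sa hq_idem v
    have h6 : ‖p (q v)‖ = ‖v‖ := by nlinarith [norm_nonneg (p (q v)), norm_nonneg v]
    have h7 : ‖q v‖ = ‖v‖ := le_antisymm h5 (h6 ▸ h4)
    have hqv : q v = v := aux_fixed_of_norm_eq q hq_sa hq_idem v h7
    rw [hqv] at h6
    exact ⟨aux_fixed_of_norm_eq p hp_sa hp_idem v h6, hqv⟩
  have hmemK : ∀ v : H, v ∈ K ↔ T v = v := by
    intro v
    constructor
    · intro hv
      obtain ⟨hvp, hvq⟩ := Submodule.mem_inf.mp hv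
      have h1 := (aux_mem_range_iff p hp_idem v).mp hvp
      have h2 := (aux_mem_range_iff q hq_idem v).mp hvq
      show q (p (q v)) = v
      rw [h2, h1, h2]
    · intro hv
      obtain ⟨h1, h2⟩ := hfix v hv
      exact Submodule.mem_inf.mpr ⟨(aux_mem_range_iff p hp_idem v).mpr h1,
        (aux_mem_range_iff q hq_idem v).mpr h2⟩
  -- behaviour of the projection on eigenvectors
  have hP1 : ∀ i, μ i = 1 → (K.subtypeL ∘L Submodule.orthogonalProjectionOnto K) (b i) = b i := by
    intro i h
    have hbK : b i ∈ K := (hmemK _).mpr (by rw [hb i, h]; simp)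
    show (Submodule.orthogonalProjectionOnto K (b i) : H) = b i
    exact Submodule.starProjection_eq_self_iff.mpr hbK
  have hP0 : ∀ i, μ i ≠ 1 → (K.subtypeL ∘L Submodule.orthogonalProjectionOnto K) (b i) = 0 := by
    intro i h
    have hbo : b i ∈ Kᗮ := by
      rw [Submodule.mem_orthogonal]
      intro u hu
      have hTu : T u = u := (hmemK u).mp hu
      have h1 : (inner ℂ (T u) (b i) : ℂ) = inner ℂ u (T (b i)) := hT_symm u (b i)
      rw [hTu, hb i, inner_smul_right] at h1
      have hμne : (μ i : ℂ) ≠ 1 := by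
        intro hc
        exact h (by exact_mod_cast hc)
      have h2 : ((μ i : ℂ) - 1) * inner ℂ u (b i) = 0 := by linear_combination -h1
      rcases mul_eq_zero.mp h2 with h3 | h3
      · exact absurd (by linear_combination h3) hμne
      · exact h3
    show (Submodule.orthogonalProjectionOnto K (b i) : H) = 0
    rw [Submodule.orthogonalProjectionOnto_apply_of_mem_orthogonal hbo]
    rfl
  -- powers of T on eigenvectors
  have hpow : ∀ (k : ℕ) (i : Fin N), (T ^ k) (b i) = ((μ i : ℂ) ^ k) • b i := by
    intro k i
    induction k with
    | zero => simp
    | succ k ih =>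
      rw [pow_succ, ContinuousLinearMap.mul_apply, hb i, map_smul, ih, smul_smul,
        mul_comm, ← pow_succ]
  -- pointwise convergence on the eigenbasis
  have hptwise : ∀ i, Tendsto (fun k : ℕ => (T ^ k) (b i)) atTop
      (nhds ((K.subtypeL ∘L Submodule.orthogonalProjectionOnto K) (b i))) := by
    intro i
    by_cases h : μ i = 1
    · rw [hP1 i h]
      simp only [hpow, h, Complex.ofReal_one, one_pow, one_smul]
      exact tendsto_const_nhds
    · rw [hP0 i h]
      simp only [hpow]
      have h1 : Tendsto (fun k : ℕ => (μ i) ^ k) atTop (nhds 0) :=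
        tendsto_pow_atTop_nhds_zero_of_lt_one (hμ0 i) (lt_of_le_of_ne (hμ1 i) h)
      have h2 : Tendsto (fun k : ℕ => ((μ i : ℂ)) ^ k) atTop (nhds 0) := by
        have := (Complex.continuous_ofReal.tendsto 0).comp h1
        simpa [Function.comp_def, ← Complex.ofReal_pow] using this
      simpa using h2.smul_const (b i)
  -- transfer pointwise convergence to norm convergence via finite-dimensionality
  let Φ : (H →L[ℂ] H) →ₗ[ℂ] (Fin N → H) :=
    { toFun := fun A => fun i => A (b i)
      map_add' := fun A B => by ext i; simp
      map_smul' := fun c A => by ext i; simp }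
  have hΦinj : Function.Injective Φ := by
    intro A B hAB
    apply ContinuousLinearMap.coe_injective
    exact Module.Basis.ext b.toBasis fun i => by have h : A (b i) = B (b i) := congrFun hAB i; simpa using h
  let e : (H →L[ℂ] H) ≃ₗ[ℂ] LinearMap.range Φ := LinearEquiv.ofInjective Φ hΦinj
  let he : (H →L[ℂ] H) ≃L[ℂ] LinearMap.range Φ := e.toContinuousLinearEquiv
  rw [he.toHomeomorph.isInducing.tendsto_nhds_iff]
  rw [Topology.IsEmbedding.subtypeVal.tendsto_nhds_iff]
  rw [tendsto_pi_nhds]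
  intro i
  exact hptwise i
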